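/- For the nonnegative regularized square-root LASSO min over x ≥ 0 of ||Ax - b||_2 + λ^T x with A = [Φ; σI], b = [y; 0], y ≠ 0, the point x = 0 is optimal if and only if φ_i^T y ≤ λ_i ||y||_2 for all i = 1,…,n. -/

import Mathlib

/-- Objective of the nonnegative regularized square-root LASSO with
`A = [Φ; σI]`, `b = [y; 0]`: `‖Ax - b‖₂ + λᵀ x` (for `x ≥ 0`). -/
noncomputable def nnrsqrtObj {m n : ℕ} (Φ : Matrix (Fin m) (Fin n) ℝ)
    (y : Fin m → ℝ) (σ : ℝ) (lam : Fin n → ℝ) (x : Fin n → ℝ) : ℝ :=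
  Real.sqrt ((∑ k, (Φ.mulVec x - y) k ^ 2) + ∑ j, (σ * x j) ^ 2)
    + ∑ i, lam i * x i

noncomputable def norm2 {m : ℕ} (v : Fin m → ℝ) : ℝ := Real.sqrt (∑ k, v k ^ 2)
noncomputable def dot {m : ℕ} (u v : Fin m → ℝ) : ℝ := ∑ k, u k * v k

theorem nnrsqrtLASSO_zero_optimal_iff {m n : ℕ}
    (Φ : Matrix (Fin m) (Fin n) ℝ) (y : Fin m → ℝ) (hy : y ≠ 0)
    (σ : ℝ) (hσ : 0 ≤ σ) (lam : Fin n → ℝ) (hlam : ∀ i, 0 ≤ lam i) :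
    (∀ x : Fin n → ℝ, (∀ i, 0 ≤ x i) →
        nnrsqrtObj Φ y σ lam 0 ≤ nnrsqrtObj Φ y σ lam x)
      ↔ ∀ i, dot (fun k => Φ k i) y ≤ lam i * norm2 y := by
  have hyk : ∃ k, y k ≠ 0 := by
    by_contra h; push_neg at h; exact hy (funext h)
  have hsumnn : (0:ℝ) ≤ ∑ k, y k ^ 2 := Finset.sum_nonneg fun k _ => sq_nonneg _
  have hN0 : 0 < norm2 y := by
    obtain ⟨k, hk⟩ := hyk
    have h1 : 0 < y k ^ 2 := by positivity
    exact Real.sqrt_pos.mpr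
      (lt_of_lt_of_le h1 (Finset.single_le_sum (f := fun j => y j ^ 2)
        (fun j _ => sq_nonneg _) (Finset.mem_univ k)))
  set N := norm2 y with hNdef
  have hN2 : N ^ 2 = ∑ k, y k ^ 2 := Real.sq_sqrt hsumnn
  have hf0 : nnrsqrtObj Φ y σ lam 0 = N := by
    simp [nnrsqrtObj, norm2, Matrix.mulVec_zero, hNdef]
  constructor
  · intro hopt i
    by_contra hc
    push_neg at hc
    set c := dot (fun k => Φ k i) y with hcdef
    set d := (∑ k, Φ k i ^ 2) + σ ^ 2 with hddef
    have hd0 : (0:ℝ) ≤ d := by positivity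
    set δ := c - lam i * N with hδdef
    have hδ : 0 < δ := sub_pos.mpr hc
    set t := δ / (d + 1) with htdef
    have ht : 0 < t := div_pos hδ (by linarith)
    set x : Fin n → ℝ := fun j => if j = i then t else 0 with hxdef
    have hxnn : ∀ j, 0 ≤ x j := by
      intro j; simp only [hxdef]; split
      · exact le_of_lt ht
      · exact le_refl 0
    have hmul : ∀ k, Φ.mulVec x k = Φ k i * t := by
      intro k
      simp [Matrix.mulVec, dotProduct, hxdef, mul_ite, mul_zero]
    have hs : (∑ k, (Φ.mulVec x - y) k ^ 2) + ∑ j, (σ * x j) ^ 2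
        = N ^ 2 - 2 * t * c + t ^ 2 * d := by
      have h1 : ∑ k, (Φ.mulVec x - y) k ^ 2
          = t ^ 2 * (∑ k, Φ k i ^ 2) - 2 * t * c + ∑ k, y k ^ 2 := by
        have e : ∀ k : Fin m, (Φ.mulVec x - y) k ^ 2
            = t ^ 2 * Φ k i ^ 2 - 2 * t * (Φ k i * y k) + y k ^ 2 := by
          intro k; simp only [Pi.sub_apply, hmul k]; ring
        rw [Finset.sum_congr rfl (fun k _ => e k), Finset.sum_add_distrib,
          Finset.sum_sub_distrib, ← Finset.mul_sum, ← Finset.mul_sum, hcdef, dot]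
      have h2 : ∑ j, (σ * x j) ^ 2 = σ ^ 2 * t ^ 2 := by
        simp [hxdef, mul_ite, mul_zero, ite_pow, Finset.sum_ite_eq', mul_pow]
      rw [h1, h2, hN2, hddef]; ring
    have hlinx : ∑ j, lam j * x j = lam i * t := by
      simp [hxdef, mul_ite, mul_zero, Finset.sum_ite_eq']
    have hobj : nnrsqrtObj Φ y σ lam x < N := by
      rw [nnrsqrtObj, hs, hlinx]
      have hs0 : 0 ≤ N ^ 2 - 2 * t * c + t ^ 2 * d := by rw [← hs]; positivity
      have h1 : Real.sqrt (N ^ 2 - 2 * t * c + t ^ 2 * d) ^ 2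
          = N ^ 2 - 2 * t * c + t ^ 2 * d := Real.sq_sqrt hs0
      have h2 := sq_nonneg (Real.sqrt (N ^ 2 - 2 * t * c + t ^ 2 * d) - N)
      have h3 : t * (d + 1) = δ := by rw [htdef]; field_simp
      have htd : t * d / 2 < δ := by nlinarith [mul_nonneg ht.le hd0]
      nlinarith [mul_lt_mul_of_pos_left htd ht, hN0, ht, hδ,
        Real.sqrt_nonneg (N ^ 2 - 2 * t * c + t ^ 2 * d)]
    have := hopt x hxnn
    rw [hf0] at this
    linarith
  · intro h x hx
    rw [hf0]
    set u := Φ.mulVec x with hudef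
    have hcs : ∑ k, y k * (y k - u k) ≤ N * Real.sqrt (∑ k, (u - y) k ^ 2) := by
      have h := Real.sum_mul_le_sqrt_mul_sqrt Finset.univ y (fun k => y k - u k)
      have heq : ∑ k, (u - y) k ^ 2 = ∑ k, (y k - u k) ^ 2 := by
        apply Finset.sum_congr rfl; intro k _; simp only [Pi.sub_apply]; ring
      rw [heq, hNdef, norm2]
      simpa using h
    have hswap : ∑ k, y k * (y k - u k)
        = N ^ 2 - ∑ i, dot (fun k => Φ k i) y * x i := by
      have h1 : ∑ k, y k * u k = ∑ i, dot (fun k => Φ k i) y * x i := by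
        simp only [hudef, Matrix.mulVec, dotProduct, dot, Finset.mul_sum,
          Finset.sum_mul]
        rw [Finset.sum_comm]
        apply Finset.sum_congr rfl; intro i _
        apply Finset.sum_congr rfl; intro k _; ring
      have h2 : ∑ k, y k * (y k - u k) = (∑ k, y k ^ 2) - ∑ k, y k * u k := by
        rw [← Finset.sum_sub_distrib]
        apply Finset.sum_congr rfl; intro k _; ring
      rw [h2, h1, hN2]
    have hlin : ∑ i, dot (fun k => Φ k i) y * x i ≤ N * ∑ i, lam i * x i := by
      rw [Finset.mul_sum]
      apply Finset.sum_le_sum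
      intro i _
      have := mul_le_mul_of_nonneg_right (h i) (hx i)
      calc dot (fun k => Φ k i) y * x i ≤ lam i * N * x i := this
        _ = N * (lam i * x i) := by ring
    have hsq1 : Real.sqrt (∑ k, (u - y) k ^ 2)
        ≤ Real.sqrt ((∑ k, (u - y) k ^ 2) + ∑ j, (σ * x j) ^ 2) :=
      Real.sqrt_le_sqrt (le_add_of_nonneg_right (by positivity))
    have hbig : N * (N - ∑ i, lam i * x i)
        ≤ N * Real.sqrt ((∑ k, (u - y) k ^ 2) + ∑ j, (σ * x j) ^ 2) := by
      calc N * (N - ∑ i, lam i * x i)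
          = N ^ 2 - N * ∑ i, lam i * x i := by ring
        _ ≤ N ^ 2 - ∑ i, dot (fun k => Φ k i) y * x i := by linarith
        _ = ∑ k, y k * (y k - u k) := hswap.symm
        _ ≤ N * Real.sqrt (∑ k, (u - y) k ^ 2) := hcs
        _ ≤ N * Real.sqrt ((∑ k, (u - y) k ^ 2) + ∑ j, (σ * x j) ^ 2) := by
            exact mul_le_mul_of_nonneg_left hsq1 (le_of_lt hN0)
    rw [nnrsqrtObj]
    have := le_of_mul_le_mul_left hbig hN0
    linarith
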